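/- The coefficient of s^k in J(G, 0, 1, 0, 0, s, 1) equals the number of spanning subgraphs H of G with exactly k connected components such that in each connected component the number of edges equals the number of vertices (k-components spanning functional subgraphs). -/

import Mathlib

/-- A finite multigraph with loops: vertices and edges are labeled by
naturals, and `φ` assigns to each edge label its unordered pair of
endpoints. -/
structure MG where
  V : Finset ℕ
  E : Finset ℕ
  φ : ℕ → Sym2 ℕ

namespace MG

noncomputable section
open scoped Classical
open Finset

/-- Well-formed: endpoints of edges lie in the vertex set. -/
def WF (G : MG) : Prop := ∀ e ∈ G.E, ∀ x ∈ G.φ e, x ∈ G.V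

/-- Simple: no loops and no parallel edges, and well-formed. -/
def Simple (G : MG) : Prop :=
  G.WF ∧ (∀ e ∈ G.E, ¬ (G.φ e).IsDiag) ∧
    ∀ e ∈ G.E, ∀ e' ∈ G.E, G.φ e = G.φ e' → e = e'

/-- Degree of a vertex (loops count twice). -/
def deg (G : MG) (v : ℕ) : ℕ :=
  ∑ e ∈ G.E, ((if v ∈ G.φ e then 1 else 0) + (if G.φ e = Sym2.diag v then 1 else 0))

/-- Adjacency by some edge. -/
def Adj (G : MG) (x y : ℕ) : Prop := ∃ e ∈ G.E, G.φ e = s(x, y)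

/-- Reachability. -/
def Reach (G : MG) : ℕ → ℕ → Prop := Relation.ReflTransGen G.Adj

/-- The connected component of `v` (as a set of vertices). -/
def comp (G : MG) (v : ℕ) : Finset ℕ := G.V.filter (fun w => G.Reach v w)

/-- Number of connected components. -/
def k (G : MG) : ℕ := (G.V.image G.comp).card

/-- The subgraph determined by a pair (vertex set, edge set). -/
def sub (G : MG) (p : Finset ℕ × Finset ℕ) : MG := ⟨p.1, p.2, G.φ⟩

/-- All subgraphs of `G`, encoded as (vertex set, edge set) pairs. -/
def subPairs (G : MG) : Finset (Finset ℕ × Finset ℕ) :=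
  (G.V.powerset ×ˢ G.E.powerset).filter (fun p => ∀ e ∈ p.2, ∀ x ∈ G.φ e, x ∈ p.1)

/-- Edge deletion. -/
def delE (G : MG) (e : ℕ) : MG := ⟨G.V, G.E.erase e, G.φ⟩

/-- Vertex deletion (with all incident edges). -/
def delV (G : MG) (u : ℕ) : MG :=
  ⟨G.V.erase u, G.E.filter (fun e => u ∉ G.φ e), G.φ⟩

/-- Contraction of the edge `e` with endpoints `u`, `v`: delete `e`,
merge `u` into `v`. -/
def contract (G : MG) (e u v : ℕ) : MG :=
  ⟨G.V.erase u, G.E.erase e,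
    fun e' => Sym2.map (fun x => if x = u then v else x) (G.φ e')⟩

/-- Disjoint union (sensible when the vertex and edge label sets are disjoint). -/
def disjUnion (G H : MG) : MG :=
  ⟨G.V ∪ H.V, G.E ∪ H.E, fun e => if e ∈ G.E then G.φ e else H.φ e⟩

/-- One vertex with `n` loops. -/
def K1 (n : ℕ) : MG := ⟨{0}, Finset.range n, fun _ => Sym2.diag 0⟩

/-- The empty graph. -/
def emp : MG := ⟨∅, ∅, fun _ => Sym2.diag 0⟩

/-- Number of Hamiltonian cycles: connected spanning subgraphs with all
degrees 2. -/
def h (G : MG) : ℕ :=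
  ((G.subPairs).filter (fun p =>
    p.1 = G.V ∧ (G.sub p).k = 1 ∧ ∀ v ∈ p.1, (G.sub p).deg v = 2)).card

/-- Number of 2-factors with exactly `k₀` components. -/
def hk (G : MG) (k₀ : ℕ) : ℕ :=
  ((G.subPairs).filter (fun p =>
    p.1 = G.V ∧ (G.sub p).k = k₀ ∧ ∀ v ∈ p.1, (G.sub p).deg v = 2)).card

/-- Number of subgraphs with `k₀` components and `l` edges in which every
vertex has degree 2. -/
def ckl (G : MG) (k₀ l : ℕ) : ℕ :=
  ((G.subPairs).filter (fun p =>
    (G.sub p).k = k₀ ∧ p.2.card = l ∧ ∀ v ∈ p.1, (G.sub p).deg v = 2)).card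

/-- Number of `j`-matchings: subgraphs with `2j` vertices, all of degree 1. -/
def m (G : MG) (j : ℕ) : ℕ :=
  ((G.subPairs).filter (fun p =>
    p.1.card = 2 * j ∧ ∀ v ∈ p.1, (G.sub p).deg v = 1)).card

/-- Isomorphism of multigraphs. -/
def Iso (G H : MG) : Prop :=
  ∃ f g : ℕ → ℕ, Set.BijOn f ↑G.V ↑H.V ∧ Set.BijOn g ↑G.E ↑H.E ∧
    ∀ e ∈ G.E, H.φ (g e) = Sym2.map f (G.φ e)

end
end MG


namespace MG
noncomputable section
open scoped Classical

/-- The edges of `H` with both endpoints in `C`. -/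
def edgesWithin (H : MG) (C : Finset ℕ) : Finset ℕ :=
  H.E.filter (fun e => ∀ x ∈ H.φ e, x ∈ C)

/-- The number of spanning subgraphs of `G` with exactly `k₀` connected
components in each of which the number of edges equals the number of
vertices (k-components spanning functional subgraphs). -/
def funcCount (G : MG) (k₀ : ℕ) : ℕ :=
  ((G.subPairs).filter (fun p =>
    p.1 = G.V ∧ (G.sub p).k = k₀ ∧
      ∀ v ∈ p.1,
        ((G.sub p).edgesWithin ((G.sub p).comp v)).card = ((G.sub p).comp v).card)).card

/-- The number of subgraphs of `G` with exactly `k₀` connected components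
and `l` edges in each of whose components #edges ≤ #vertices. -/
def subFuncCount (G : MG) (k₀ l : ℕ) : ℕ :=
  ((G.subPairs).filter (fun p =>
    (G.sub p).k = k₀ ∧ p.2.card = l ∧
      ∀ v ∈ p.1,
        ((G.sub p).edgesWithin ((G.sub p).comp v)).card ≤ ((G.sub p).comp v).card)).card

end
end MG

namespace MG
noncomputable section
open scoped Classical
open Finset

lemma adj_symm {G : MG} {x y : ℕ} (h : G.Adj x y) : G.Adj y x := by
  obtain ⟨e, he, hφ⟩ := h
  exact ⟨e, he, by rw [hφ, Sym2.eq_swap]⟩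

lemma reach_symm {G : MG} {x y : ℕ} (h : G.Reach x y) : G.Reach y x :=
  haveI : Std.Symm G.Adj := ⟨fun _ _ => adj_symm⟩
  (Relation.ReflTransGen.symmetric (r := G.Adj)).symm _ _ h

lemma reach_trans {G : MG} {x y z : ℕ} (h : G.Reach x y) (h' : G.Reach y z) :
    G.Reach x z := Relation.ReflTransGen.trans h h'

lemma mem_comp_iff {G : MG} {v w : ℕ} : w ∈ G.comp v ↔ w ∈ G.V ∧ G.Reach v w := by
  simp [comp]

lemma mem_comp_self {G : MG} {v : ℕ} (hv : v ∈ G.V) : v ∈ G.comp v :=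
  mem_comp_iff.2 ⟨hv, Relation.ReflTransGen.refl⟩

lemma comp_eq_of_reach {G : MG} {x y : ℕ} (h : G.Reach x y) : G.comp x = G.comp y := by
  ext w
  simp only [mem_comp_iff]
  exact ⟨fun ⟨hw, hr⟩ => ⟨hw, reach_trans (reach_symm h) hr⟩,
    fun ⟨hw, hr⟩ => ⟨hw, reach_trans h hr⟩⟩

end
end MG
namespace MG
noncomputable section
open scoped Classical
open Finset

lemma mem_diag_self {a : ℕ} : a ∈ Sym2.diag a := by simp [Sym2.diag]

lemma reach_eq_of_loops {G : MG} (hL : ∀ e ∈ G.E, (G.φ e).IsDiag) {x y : ℕ}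
    (h : G.Reach x y) : x = y := by
  induction h with
  | refl => rfl
  | tail _ hadj ih =>
    obtain ⟨e, he, hφ⟩ := hadj
    have := hL e he
    rw [hφ, Sym2.mk_isDiag_iff] at this
    omega

lemma comp_loops {G : MG} (hL : ∀ e ∈ G.E, (G.φ e).IsDiag) {v : ℕ} (hv : v ∈ G.V) :
    G.comp v = {v} := by
  ext w
  simp only [mem_comp_iff, Finset.mem_singleton]
  constructor
  · rintro ⟨_, hr⟩; exact (reach_eq_of_loops hL hr).symm
  · rintro rfl; exact ⟨hv, Relation.ReflTransGen.refl⟩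

lemma k_loops {G : MG} (hL : ∀ e ∈ G.E, (G.φ e).IsDiag) : G.k = G.V.card := by
  unfold k
  rw [Finset.card_image_of_injOn]
  intro x hx y hy hxy
  have hx' : x ∈ G.comp x := mem_comp_self (by simpa using hx)
  rw [hxy, comp_loops hL (by simpa using hy)] at hx'
  simpa using hx'

lemma edgesWithin_loops {G : MG} (hL : ∀ e ∈ G.E, (G.φ e).IsDiag) {v : ℕ} :
    G.edgesWithin {v} = G.E.filter (fun e => G.φ e = Sym2.diag v) := by
  unfold edgesWithin
  apply Finset.filter_congr
  intro e he
  have := hL e he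
  obtain ⟨a, b, hab⟩ : ∃ a b, G.φ e = s(a, b) := by
    induction G.φ e using Sym2.inductionOn with
    | _ x y => exact ⟨x, y, rfl⟩
  rw [hab, Sym2.mk_isDiag_iff] at this
  subst this
  simp only [hab, eq_comm (a := Sym2.diag v)]
  constructor
  · intro h
    have := h a (by simp)
    simp only [Finset.mem_singleton] at this
    subst this
    rfl
  · intro h x hx
    rw [show Sym2.diag v = s(v,v) from rfl, Sym2.eq_iff] at h
    simp only [Sym2.mem_iff] at hx
    simp only [Finset.mem_singleton]
    omega

end
end MG
namespace MG
noncomputable section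
open scoped Classical
open Finset

lemma mem_subPairs {G : MG} {p : Finset ℕ × Finset ℕ} :
    p ∈ G.subPairs ↔ p.1 ⊆ G.V ∧ p.2 ⊆ G.E ∧ ∀ e ∈ p.2, ∀ x ∈ G.φ e, x ∈ p.1 := by
  simp [subPairs, Finset.mem_filter, Finset.mem_product, and_assoc]

lemma phi_eq_diag_of_loops {G : MG} (hL : ∀ e ∈ G.E, (G.φ e).IsDiag) {e : ℕ}
    (he : e ∈ G.E) : ∃ a, a ∈ G.φ e ∧ G.φ e = Sym2.diag a := by
  have := hL e he
  obtain ⟨a, b, hab⟩ : ∃ a b, G.φ e = s(a, b) := by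
    induction G.φ e using Sym2.inductionOn with
    | _ x y => exact ⟨x, y, rfl⟩
  rw [hab, Sym2.mk_isDiag_iff] at this
  subst this
  exact ⟨a, by rw [hab]; simp, by rw [hab]; rfl⟩

lemma mem_funcset_loops {G : MG} (hWF : G.WF) (hL : ∀ e ∈ G.E, (G.φ e).IsDiag)
    {p : Finset ℕ × Finset ℕ} :
    (p ∈ G.subPairs ∧ (p.1 = G.V ∧ (G.sub p).k = G.V.card ∧
      ∀ v ∈ p.1, ((G.sub p).edgesWithin ((G.sub p).comp v)).card = ((G.sub p).comp v).card))
    ↔ (p.1 = G.V ∧ p.2 ⊆ G.E ∧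
        ∀ v ∈ G.V, (p.2.filter (fun e => G.φ e = Sym2.diag v)).card = 1) := by
  have hsub : ∀ (hE : p.2 ⊆ G.E), ∀ e ∈ (G.sub p).E, ((G.sub p).φ e).IsDiag :=
    fun hE e he => hL e (hE he)
  constructor
  · rintro ⟨hsp, h1, _, h3⟩
    obtain ⟨-, hE, -⟩ := mem_subPairs.1 hsp
    refine ⟨h1, hE, fun v hv => ?_⟩
    have hv' : v ∈ (G.sub p).V := by rw [show (G.sub p).V = p.1 from rfl, h1]; exact hv
    have hc := comp_loops (hsub hE) hv'
    have := h3 v (by rw [h1]; exact hv)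
    rw [hc, edgesWithin_loops (hsub hE)] at this
    rw [Finset.card_singleton] at this
    convert this using 3 <;> rfl
  · rintro ⟨h1, hE, h3⟩
    have hmem : p ∈ G.subPairs := mem_subPairs.2 ⟨h1.le, hE,
      fun e he x hx => by rw [h1]; exact hWF e (hE he) x hx⟩
    refine ⟨hmem, h1, ?_, fun v hv => ?_⟩
    · rw [k_loops (hsub hE), show (G.sub p).V = p.1 from rfl, h1]
    · have hv' : v ∈ (G.sub p).V := hv
      have hc := comp_loops (hsub hE) hv'
      rw [hc, edgesWithin_loops (hsub hE)]
      rw [Finset.card_singleton]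
      convert h3 v (by rw [← h1]; exact hv) using 3 <;> rfl

lemma funcCount_loops_ne {G : MG} (hL : ∀ e ∈ G.E, (G.φ e).IsDiag) {k₀ : ℕ}
    (hk : k₀ ≠ G.V.card) : G.funcCount k₀ = 0 := by
  unfold funcCount
  rw [Finset.card_eq_zero, Finset.filter_eq_empty_iff]
  rintro p hp ⟨h1, h2, -⟩
  obtain ⟨-, hE, -⟩ := mem_subPairs.1 hp
  apply hk
  rw [← h2, k_loops (G := G.sub p) (fun e he => hL e (hE he)), show (G.sub p).V = p.1 from rfl, h1]

lemma pi_filter_eq {G : MG} {f : (a : ℕ) → a ∈ G.V → ℕ}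
    (hf : f ∈ G.V.pi (fun v => G.E.filter (fun e => G.φ e = Sym2.diag v)))
    {v : ℕ} (hv : v ∈ G.V) :
    ((G.V.attach.image (fun x => f x.1 x.2)).filter (fun e => G.φ e = Sym2.diag v))
      = {f v hv} := by
  rw [Finset.mem_pi] at hf
  ext e
  simp only [Finset.mem_filter, Finset.mem_image, Finset.mem_singleton, Finset.mem_attach,
    true_and]
  constructor
  · rintro ⟨⟨⟨x, hx⟩, rfl⟩, hd⟩
    have hx' := (Finset.mem_filter.1 (hf x hx)).2
    rw [hx'] at hd
    have : x = v := Sym2.diag_injective hd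
    subst this
    rfl
  · rintro rfl
    exact ⟨⟨⟨v, hv⟩, rfl⟩, (Finset.mem_filter.1 (hf v hv)).2⟩

def pick (s : Finset ℕ) : ℕ := if h : s.Nonempty then s.min' h else 0

lemma pick_mem {s : Finset ℕ} (h : s.Nonempty) : pick s ∈ s := by
  rw [pick, dif_pos h]; exact Finset.min'_mem s h

lemma pick_singleton (a : ℕ) : pick {a} = a := by
  rw [pick, dif_pos ⟨a, Finset.mem_singleton_self a⟩]; exact Finset.min'_singleton a

lemma funcCount_loops_card {G : MG} (hWF : G.WF) (hL : ∀ e ∈ G.E, (G.φ e).IsDiag) :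
    G.funcCount G.V.card
      = ∏ v ∈ G.V, (G.E.filter (fun e => G.φ e = Sym2.diag v)).card := by
  rw [← Finset.card_pi]
  unfold funcCount
  apply Finset.card_bij'
    (i := fun p _ => fun v _ => pick (p.2.filter (fun e => G.φ e = Sym2.diag v)))
    (j := fun f _ => (G.V, G.V.attach.image (fun x => f x.1 x.2)))
  · -- hi
    intro p hp
    obtain ⟨-, hE, h3⟩ := (mem_funcset_loops hWF hL).1 (Finset.mem_filter.1 hp)
    rw [Finset.mem_pi]
    intro v hv
    have hne : (p.2.filter (fun e => G.φ e = Sym2.diag v)).Nonempty :=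
      Finset.card_pos.1 (by rw [h3 v hv]; exact Nat.one_pos)
    have hm := pick_mem hne
    rw [Finset.mem_filter] at hm ⊢
    exact ⟨hE hm.1, hm.2⟩
  · -- hj
    intro f hf
    refine Finset.mem_filter.2 ⟨?_, ?_⟩
    · refine ((mem_funcset_loops hWF hL).2 ⟨rfl, ?_, ?_⟩).1
      · intro e he
        simp only [Finset.mem_image] at he
        obtain ⟨x, -, rfl⟩ := he
        exact (Finset.mem_filter.1 ((Finset.mem_pi.1 hf) x.1 x.2)).1
      · intro v hv
        rw [pi_filter_eq hf hv, Finset.card_singleton]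
    · refine ((mem_funcset_loops hWF hL).2 ⟨rfl, ?_, ?_⟩).2
      · intro e he
        simp only [Finset.mem_image] at he
        obtain ⟨x, -, rfl⟩ := he
        exact (Finset.mem_filter.1 ((Finset.mem_pi.1 hf) x.1 x.2)).1
      · intro v hv
        rw [pi_filter_eq hf hv, Finset.card_singleton]
  · -- left inverse
    intro p hp
    obtain ⟨h1, hE, h3⟩ := (mem_funcset_loops hWF hL).1 (Finset.mem_filter.1 hp)
    obtain ⟨-, -, hend⟩ := mem_subPairs.1 (Finset.mem_filter.1 hp).1
    refine Prod.ext h1.symm ?_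
    show (G.V.attach.image
      (fun x => pick (p.2.filter (fun e => G.φ e = Sym2.diag x.1)))) = p.2
    ext e
    simp only [Finset.mem_image, Finset.mem_attach, true_and]
    constructor
    · rintro ⟨⟨x, hx⟩, rfl⟩
      have hne : (p.2.filter (fun e => G.φ e = Sym2.diag x)).Nonempty :=
        Finset.card_pos.1 (by rw [h3 x hx]; exact Nat.one_pos)
      exact (Finset.mem_filter.1 (pick_mem hne)).1
    · intro he
      obtain ⟨a, ha1, ha2⟩ := phi_eq_diag_of_loops hL (hE he)
      have hav : a ∈ G.V := by rw [← h1]; exact hend e he a ha1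
      refine ⟨⟨a, hav⟩, ?_⟩
      obtain ⟨c, hc⟩ := Finset.card_eq_one.1 (h3 a hav)
      have hec : e ∈ ({c} : Finset ℕ) := by
        rw [← hc, Finset.mem_filter]; exact ⟨he, ha2⟩
      rw [Finset.mem_singleton] at hec
      simp only
      rw [hc, pick_singleton, hec]
  · -- right inverse
    intro f hf
    funext v hv
    simp only
    rw [pi_filter_eq hf hv, pick_singleton]

end
end MG
namespace MG
noncomputable section
open scoped Classical
open Finset

lemma sym2_exists_pair (z : Sym2 ℕ) : ∃ a b, z = s(a, b) := by
  induction z using Sym2.inductionOn with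
  | _ x y => exact ⟨x, y, rfl⟩

lemma contract_core {G : MG} {e u v : ℕ} (hWF : G.WF) (he : e ∈ G.E)
    (hφ : G.φ e = s(u, v)) (huv : u ≠ v) {S : Finset ℕ} (heS : e ∈ S) (hSE : S ⊆ G.E)
    (k₀ : ℕ) :
    ((G.sub (G.V, S)).k = k₀ ∧
        ∀ w ∈ G.V, ((G.sub (G.V, S)).edgesWithin ((G.sub (G.V, S)).comp w)).card
          = ((G.sub (G.V, S)).comp w).card)
    ↔ (((G.contract e u v).sub (G.V.erase u, S.erase e)).k = k₀ ∧
        ∀ w ∈ G.V.erase u,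
          ((((G.contract e u v).sub (G.V.erase u, S.erase e)).edgesWithin
            (((G.contract e u v).sub (G.V.erase u, S.erase e)).comp w)).card
          = (((G.contract e u v).sub (G.V.erase u, S.erase e)).comp w).card)) := by
  have hu : u ∈ G.V := hWF e he u (by rw [hφ]; simp)
  have hv : v ∈ G.V := hWF e he v (by rw [hφ]; simp)
  set A : MG := G.sub (G.V, S) with hA
  set B : MG := (G.contract e u v).sub (G.V.erase u, S.erase e) with hB
  have hAV : A.V = G.V := rfl
  have hAE : A.E = S := rfl
  have hAφ : ∀ e', A.φ e' = G.φ e' := fun _ => rfl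
  have hBV : B.V = G.V.erase u := rfl
  have hBE : B.E = S.erase e := rfl
  have hBφ : ∀ e', B.φ e' = Sym2.map (fun x => if x = u then v else x) (G.φ e') :=
    fun _ => rfl
  have hru : A.Reach u v := Relation.ReflTransGen.single ⟨e, heS, hφ⟩
  have hπ : ∀ x, A.Reach x (if x = u then v else x) := by
    intro x
    by_cases hx : x = u
    · rw [if_pos hx]; subst hx; exact hru
    · rw [if_neg hx]
      exact Relation.ReflTransGen.refl
  have hπrev : ∀ x, A.Reach (if x = u then v else x) x := fun x => reach_symm (hπ x)
  -- L1
  have hL1 : ∀ x y, A.Reach x y →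
      B.Reach (if x = u then v else x) (if y = u then v else y) := by
    intro x y h
    induction h with
    | refl => exact Relation.ReflTransGen.refl
    | tail _ hbc ih =>
      refine Relation.ReflTransGen.trans ih ?_
      obtain ⟨e', he', hbc⟩ := hbc
      rw [hAE] at he'
      by_cases hee : e' = e
      · subst hee
        rw [hAφ, hφ] at hbc
        rcases Sym2.eq_iff.1 hbc with ⟨rfl, rfl⟩ | ⟨rfl, rfl⟩
        · rw [if_pos rfl, ite_self]
        · rw [if_pos rfl, ite_self]
      · refine Relation.ReflTransGen.single ⟨e', ?_, ?_⟩
        · rw [hBE]; exact Finset.mem_erase.2 ⟨hee, he'⟩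
        · rw [hBφ, hAφ] at *; rw [hbc, Sym2.map_pair_eq]
  -- L2
  have hL2 : ∀ x y, B.Reach x y → A.Reach x y := by
    intro x y h
    induction h with
    | refl => exact Relation.ReflTransGen.refl
    | tail _ hbc ih =>
      refine Relation.ReflTransGen.trans ih ?_
      obtain ⟨e', he', hbc⟩ := hbc
      rw [hBE, Finset.mem_erase] at he'
      obtain ⟨p, q, hpq⟩ := sym2_exists_pair (G.φ e')
      rw [hBφ, hpq, Sym2.map_pair_eq] at hbc
      have hr : A.Reach (if p = u then v else p) (if q = u then v else q) :=
        Relation.ReflTransGen.trans (hπrev p)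
          (Relation.ReflTransGen.trans
            (Relation.ReflTransGen.single ⟨e', he'.2, by rw [hAφ]; exact hpq⟩) (hπ q))
      rcases Sym2.eq_iff.1 hbc with ⟨rfl, rfl⟩ | ⟨rfl, rfl⟩
      · exact hr
      · exact reach_symm hr
  have hL3 : ∀ x y, x ≠ u → y ≠ u → (A.Reach x y ↔ B.Reach x y) := by
    intro x y hx hy
    constructor
    · intro h
      have := hL1 x y h
      rwa [if_neg hx, if_neg hy] at this
    · exact hL2 x y
  have hcompB : ∀ w, w ≠ u → B.comp w = (A.comp w).erase u := by
    intro w hw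
    ext z
    simp only [mem_comp_iff, hBV, hAV, Finset.mem_erase]
    constructor
    · rintro ⟨⟨hzu, hzV⟩, hr⟩
      exact ⟨hzu, hzV, (hL3 w z hw hzu).2 hr⟩
    · rintro ⟨hzu, hzV, hr⟩
      exact ⟨⟨hzu, hzV⟩, (hL3 w z hw hzu).1 hr⟩
  have huv_comp : ∀ w, u ∈ A.comp w ↔ v ∈ A.comp w := by
    intro w
    simp only [mem_comp_iff, hAV]
    constructor
    · rintro ⟨-, hr⟩; exact ⟨hv, reach_trans hr hru⟩
    · rintro ⟨-, hr⟩; exact ⟨hu, reach_trans hr (reach_symm hru)⟩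
  -- k equality
  have hcc : A.comp u = A.comp v := comp_eq_of_reach hru
  have himg2 : (G.V.erase u).image A.comp = G.V.image A.comp := by
    apply Finset.Subset.antisymm (Finset.image_subset_image (Finset.erase_subset u G.V))
    intro C hC
    obtain ⟨x, hx, rfl⟩ := Finset.mem_image.1 hC
    by_cases hxu : x = u
    · subst hxu
      rw [hcc]
      exact Finset.mem_image.2 ⟨v, Finset.mem_erase.2 ⟨Ne.symm huv, hv⟩, rfl⟩
    · exact Finset.mem_image.2 ⟨x, Finset.mem_erase.2 ⟨hxu, hx⟩, rfl⟩
  have hinj : Set.InjOn (fun C : Finset ℕ => C.erase u) (↑(G.V.image A.comp) : Set (Finset ℕ)) := by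
    intro C₁ hC₁ C₂ hC₂ hC
    simp only [Finset.coe_image, Set.mem_image, Finset.mem_coe] at hC₁ hC₂
    obtain ⟨x₁, -, rfl⟩ := hC₁
    obtain ⟨x₂, -, rfl⟩ := hC₂
    simp only at hC
    ext z
    by_cases hz : z = u
    · rw [hz, huv_comp x₁, huv_comp x₂]
      constructor
      · intro h
        have : v ∈ (A.comp x₁).erase u := Finset.mem_erase.2 ⟨Ne.symm huv, h⟩
        rw [hC] at this
        exact (Finset.mem_erase.1 this).2
      · intro h
        have : v ∈ (A.comp x₂).erase u := Finset.mem_erase.2 ⟨Ne.symm huv, h⟩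
        rw [← hC] at this
        exact (Finset.mem_erase.1 this).2
    · constructor
      · intro h
        have : z ∈ (A.comp x₁).erase u := Finset.mem_erase.2 ⟨hz, h⟩
        rw [hC] at this
        exact (Finset.mem_erase.1 this).2
      · intro h
        have : z ∈ (A.comp x₂).erase u := Finset.mem_erase.2 ⟨hz, h⟩
        rw [← hC] at this
        exact (Finset.mem_erase.1 this).2
  have hk : A.k = B.k := by
    unfold k
    rw [hBV, hAV]
    have h1 : (G.V.erase u).image B.comp
        = ((G.V.erase u).image A.comp).image (fun C => C.erase u) := by
      rw [Finset.image_image]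
      apply Finset.image_congr
      intro w hw
      exact hcompB w (Finset.mem_erase.1 hw).1
    rw [h1, himg2, Finset.card_image_of_injOn hinj]
  -- condition transfer
  have hcond : ∀ w, w ∈ G.V → w ≠ u →
      ((B.edgesWithin (B.comp w)).card = (B.comp w).card ↔
        (A.edgesWithin (A.comp w)).card = (A.comp w).card) := by
    intro w hwV hwu
    rw [hcompB w hwu]
    by_cases huC : u ∈ A.comp w
    · have hvC : v ∈ A.comp w := (huv_comp w).1 huC
      have hee : e ∈ A.edgesWithin (A.comp w) := by
        simp only [edgesWithin, Finset.mem_filter, hAE, hAφ, hφ]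
        refine ⟨heS, fun x hx => ?_⟩
        rcases Sym2.mem_iff.1 hx with rfl | rfl
        exacts [huC, hvC]
      have hBw : B.edgesWithin ((A.comp w).erase u) = (A.edgesWithin (A.comp w)).erase e := by
        ext e'
        simp only [edgesWithin, Finset.mem_filter, Finset.mem_erase, hAE, hAφ, hBE, hBφ]
        constructor
        · rintro ⟨⟨hne, heS'⟩, hall⟩
          refine ⟨hne, heS', fun x hx => ?_⟩
          have hm := hall _ (Sym2.mem_map.2 ⟨x, hx, rfl⟩)
          by_cases hxu : x = u
          · subst hxu; exact huC
          · rw [if_neg hxu] at hm; exact hm.2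
        · rintro ⟨hne, heS', hall⟩
          refine ⟨⟨hne, heS'⟩, fun y hy => ?_⟩
          obtain ⟨x, hx, rfl⟩ := Sym2.mem_map.1 hy
          by_cases hxu : x = u
          · rw [if_pos hxu]; exact ⟨Ne.symm huv, hvC⟩
          · rw [if_neg hxu]; exact ⟨hxu, hall x hx⟩
      rw [hBw, Finset.card_erase_of_mem hee, Finset.card_erase_of_mem huC]
      have h1 : 1 ≤ (A.edgesWithin (A.comp w)).card := Finset.card_pos.2 ⟨e, hee⟩
      have h2 : 1 ≤ (A.comp w).card := Finset.card_pos.2 ⟨u, huC⟩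
      omega
    · have hvC : v ∉ A.comp w := fun h => huC ((huv_comp w).2 h)
      rw [Finset.erase_eq_of_notMem huC]
      have hBw : B.edgesWithin (A.comp w) = A.edgesWithin (A.comp w) := by
        ext e'
        simp only [edgesWithin, Finset.mem_filter, Finset.mem_erase, hAE, hAφ, hBE, hBφ]
        constructor
        · rintro ⟨⟨hne, heS'⟩, hall⟩
          refine ⟨heS', fun x hx => ?_⟩
          have hm : (if x = u then v else x) ∈ A.comp w :=
            hall _ (Sym2.mem_map.2 ⟨x, hx, rfl⟩)
          by_cases hxu : x = u
          · rw [if_pos hxu] at hm; exact absurd hm hvC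
          · rwa [if_neg hxu] at hm
        · rintro ⟨heS', hall⟩
          have hne : e' ≠ e := by
            rintro rfl
            exact huC (hall u (by rw [hφ]; simp))
          refine ⟨⟨hne, heS'⟩, fun y hy => ?_⟩
          obtain ⟨x, hx, rfl⟩ := Sym2.mem_map.1 hy
          have hxC := hall x hx
          have hxu : x ≠ u := fun h => huC (h ▸ hxC)
          rwa [if_neg hxu]
      rw [hBw]
  -- combine
  constructor
  · rintro ⟨hk₀, hcondA⟩
    refine ⟨by rw [← hk]; exact hk₀, fun w hw => ?_⟩
    obtain ⟨hwu, hwV⟩ := Finset.mem_erase.1 hw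
    exact (hcond w hwV hwu).2 (hcondA w hwV)
  · rintro ⟨hk₀, hcondB⟩
    refine ⟨by rw [hk]; exact hk₀, fun w hwV => ?_⟩
    by_cases hwu : w = u
    · subst hwu
      rw [hcc]
      exact (hcond v hv (Ne.symm huv)).1 (hcondB v (Finset.mem_erase.2 ⟨Ne.symm huv, hv⟩))
    · exact (hcond w hwV hwu).1 (hcondB w (Finset.mem_erase.2 ⟨hwu, hwV⟩))

end
end MG
namespace MG
noncomputable section
open scoped Classical
open Finset

lemma funcCount_delContract {G : MG} (hWF : G.WF) {e u v : ℕ} (he : e ∈ G.E)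
    (hφ : G.φ e = s(u, v)) (huv : u ≠ v) (k₀ : ℕ) :
    G.funcCount k₀ = (G.delE e).funcCount k₀ + (G.contract e u v).funcCount k₀ := by
  have hu : u ∈ G.V := hWF e he u (by rw [hφ]; simp)
  have hv : v ∈ G.V := hWF e he v (by rw [hφ]; simp)
  have hsplit := Finset.card_filter_add_card_filter_not
    (s := G.subPairs.filter (fun p =>
      p.1 = G.V ∧ (G.sub p).k = k₀ ∧
        ∀ w ∈ p.1, ((G.sub p).edgesWithin ((G.sub p).comp w)).card = ((G.sub p).comp w).card))
    (p := fun p => e ∈ p.2)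
  have hdel : (((G.subPairs.filter (fun p =>
      p.1 = G.V ∧ (G.sub p).k = k₀ ∧
        ∀ w ∈ p.1, ((G.sub p).edgesWithin ((G.sub p).comp w)).card
          = ((G.sub p).comp w).card))).filter (fun p => ¬ e ∈ p.2)).card
      = (G.delE e).funcCount k₀ := by
    apply congrArg Finset.card
    ext p
    simp only [Finset.mem_filter, mem_subPairs]
    constructor
    · rintro ⟨⟨⟨hV1, hE1, hend⟩, h1, h2, h3⟩, hne⟩
      exact ⟨⟨hV1, Finset.subset_erase.2 ⟨hE1, hne⟩, hend⟩, h1, h2, h3⟩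
    · rintro ⟨⟨hV1, hE1, hend⟩, h1, h2, h3⟩
      have h' := Finset.subset_erase.1 hE1
      exact ⟨⟨⟨hV1, h'.1, hend⟩, h1, h2, h3⟩, h'.2⟩
  have hcon : (((G.subPairs.filter (fun p =>
      p.1 = G.V ∧ (G.sub p).k = k₀ ∧
        ∀ w ∈ p.1, ((G.sub p).edgesWithin ((G.sub p).comp w)).card
          = ((G.sub p).comp w).card))).filter (fun p => e ∈ p.2)).card
      = (G.contract e u v).funcCount k₀ := by
    unfold funcCount
    apply Finset.card_bij'
      (i := fun p _ => (p.1.erase u, p.2.erase e))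
      (j := fun q _ => (G.V, insert e q.2))
    case hi =>
      rintro ⟨P1, P2⟩ hp
      simp only [Finset.mem_filter, mem_subPairs] at hp
      obtain ⟨⟨⟨hV1, hE1, hend⟩, h1, h2, h3⟩, hin⟩ := hp
      subst h1
      have core := (contract_core hWF he hφ huv hin hE1 k₀).1 (And.intro h2 h3)
      refine Finset.mem_filter.2 ⟨mem_subPairs.2 ⟨?_, ?_, ?_⟩, ?_, ?_, ?_⟩
      · exact Finset.Subset.refl _
      · exact Finset.erase_subset_erase e hE1
      · intro e' he' x hx
        obtain ⟨a, ha, rfl⟩ := Sym2.mem_map.1 hx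
        have haV : a ∈ G.V := hWF e' (hE1 (Finset.mem_of_mem_erase he')) a ha
        by_cases hau : a = u
        · rw [if_pos hau]; exact Finset.mem_erase.2 ⟨Ne.symm huv, hv⟩
        · rw [if_neg hau]; exact Finset.mem_erase.2 ⟨hau, haV⟩
      · rfl
      · exact core.1
      · exact core.2
    case hj =>
      rintro ⟨Q1, Q2⟩ hq
      simp only [Finset.mem_filter, mem_subPairs] at hq
      obtain ⟨⟨hV1, hE1, hend⟩, h1, h2, h3⟩ := hq
      have h1' : Q1 = G.V.erase u := h1
      subst h1'
      have hnot : e ∉ Q2 := fun h => (Finset.mem_erase.1 (hE1 h)).1 rfl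
      have hSE : insert e Q2 ⊆ G.E :=
        Finset.insert_subset he (hE1.trans (Finset.erase_subset e G.E))
      have core := contract_core hWF he hφ huv (Finset.mem_insert_self e Q2) hSE k₀
      rw [Finset.erase_insert hnot] at core
      have lhs := core.2 (And.intro h2 h3)
      refine Finset.mem_filter.2 ⟨Finset.mem_filter.2 ⟨mem_subPairs.2 ⟨?_, hSE, ?_⟩,
        rfl, lhs.1, lhs.2⟩, Finset.mem_insert_self e Q2⟩
      · exact Finset.Subset.refl _
      · intro e' he' x hx
        exact hWF e' (hSE he') x hx
    case left_inv =>
      rintro ⟨P1, P2⟩ hp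
      simp only [Finset.mem_filter] at hp
      obtain ⟨⟨-, h1, -, -⟩, hin⟩ := hp
      simp only
      rw [Prod.mk.injEq]
      exact ⟨h1.symm, Finset.insert_erase hin⟩
    case right_inv =>
      rintro ⟨Q1, Q2⟩ hq
      simp only [Finset.mem_filter, mem_subPairs] at hq
      obtain ⟨⟨-, hE1, -⟩, h1, -, -⟩ := hq
      have hnot : e ∉ Q2 := fun h => (Finset.mem_erase.1 (hE1 h)).1 rfl
      simp only
      rw [Prod.mk.injEq]
      constructor
      · exact h1.symm
      · exact Finset.erase_insert hnot
  rw [funcCount, ← hsplit, hdel, hcon]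
  ring

end
end MG
namespace MG
noncomputable section
open scoped Classical
open Finset Polynomial

lemma F_loops (F : MG → Polynomial ℤ)
    (hIso : ∀ G H : MG, MG.Iso G H → F G = F H)
    (hMul : ∀ G₁ G₂ : MG, Disjoint G₁.V G₂.V → Disjoint G₁.E G₂.E →
      F (MG.disjUnion G₁ G₂) = F G₁ * F G₂)
    (hK1 : ∀ n : ℕ, F (MG.K1 n) = (n : Polynomial ℤ) * X)
    (hEmp : F MG.emp = 1) :
    ∀ (n : ℕ) (G : MG), G.V.card = n → G.WF → (∀ e ∈ G.E, (G.φ e).IsDiag) →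
      F G = (∏ w ∈ G.V, ((G.E.filter (fun e' => G.φ e' = Sym2.diag w)).card : Polynomial ℤ))
        * X ^ G.V.card := by
  intro n
  induction n with
  | zero =>
    intro G hV hWF hL
    have hVe : G.V = ∅ := Finset.card_eq_zero.1 hV
    have hEe : G.E = ∅ := by
      rw [Finset.eq_empty_iff_forall_notMem]
      intro e he
      obtain ⟨a, b, hab⟩ := sym2_exists_pair (G.φ e)
      have := hWF e he a (by rw [hab]; exact Sym2.mem_iff.2 (Or.inl rfl))
      rw [hVe] at this
      exact absurd this (Finset.notMem_empty a)
    have hiso : MG.Iso G MG.emp := by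
      refine ⟨id, id, ?_, ?_, ?_⟩
      · simp only [hVe, show MG.emp.V = ∅ from rfl, Finset.coe_empty]
        exact Set.bijOn_empty id
      · simp only [hEe, show MG.emp.E = ∅ from rfl, Finset.coe_empty]
        exact Set.bijOn_empty id
      · intro e he; rw [hEe] at he; exact absurd he (Finset.notMem_empty e)
    rw [hIso G MG.emp hiso, hEmp, hVe]
    simp
  | succ n ih =>
    intro G hV hWF hL
    have hne : G.V.Nonempty := Finset.card_pos.1 (by omega)
    obtain ⟨v, hv⟩ := hne
    set E₁ := G.E.filter (fun e' => G.φ e' = Sym2.diag v) with hE₁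
    set E₂ := G.E.filter (fun e' => ¬ G.φ e' = Sym2.diag v) with hE₂
    set G₁ : MG := ⟨{v}, E₁, G.φ⟩ with hG₁
    set G₂ : MG := ⟨G.V.erase v, E₂, G.φ⟩ with hG₂
    have hG : MG.disjUnion G₁ G₂ = G := by
      show MG.mk _ _ _ = G
      conv_rhs => rw [show G = MG.mk G.V G.E G.φ from rfl]
      congr 1
      · show {v} ∪ G.V.erase v = G.V
        rw [← Finset.insert_eq, Finset.insert_erase hv]
      · show E₁ ∪ E₂ = G.E
        exact Finset.filter_union_filter_not_eq _ G.E
      · funext e'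
        show (if e' ∈ E₁ then G.φ e' else G.φ e') = G.φ e'
        exact ite_self _
    have hdisjV : Disjoint G₁.V G₂.V := by
      show Disjoint {v} (G.V.erase v)
      simp [Finset.disjoint_singleton_left]
    have hdisjE : Disjoint G₁.E G₂.E := by
      show Disjoint E₁ E₂
      rw [hE₁, hE₂]
      exact Finset.disjoint_filter_filter_not G.E G.E _
    have hFG : F G = F G₁ * F G₂ := by rw [← hG]; exact hMul G₁ G₂ hdisjV hdisjE
    -- G₁ iso to K1
    have hiso1 : MG.Iso G₁ (MG.K1 E₁.card) := by
      refine ⟨fun _ => 0, fun e' => if h : e' ∈ E₁ then (E₁.equivFin ⟨e', h⟩ : ℕ) else 0,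
        ?_, ?_, ?_⟩
      · constructor
        · intro x _; show (0 : ℕ) ∈ (↑({0} : Finset ℕ) : Set ℕ); simp
        · constructor
          · intro a ha b hb _
            simp only [hG₁, Finset.coe_singleton, Set.mem_singleton_iff] at ha hb
            rw [ha, hb]
          · intro y hy
            simp only [show (MG.K1 E₁.card).V = {0} from rfl, Finset.coe_singleton,
              Set.mem_singleton_iff] at hy
            exact ⟨v, by simp [hG₁], hy.symm⟩
      · constructor
        · intro a ha
          simp only [Finset.mem_coe] at ha
          show _ ∈ (↑((MG.K1 E₁.card).E) : Set ℕ)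
          simp only [show (MG.K1 E₁.card).E = Finset.range E₁.card from rfl,
            Finset.coe_range, Set.mem_Iio]
          rw [dif_pos ha]
          exact (E₁.equivFin ⟨a, ha⟩).isLt
        · constructor
          · intro a ha b hb hab
            simp only [Finset.mem_coe] at ha hb
            simp only at hab
            rw [dif_pos ha, dif_pos hb] at hab
            have h2 : E₁.equivFin ⟨a, ha⟩ = E₁.equivFin ⟨b, hb⟩ := Fin.val_injective hab
            have h3 := E₁.equivFin.injective h2
            exact congrArg Subtype.val h3
          · intro y hy
            simp only [show (MG.K1 E₁.card).E = Finset.range E₁.card from rfl,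
              Finset.coe_range, Set.mem_Iio] at hy
            refine ⟨(E₁.equivFin.symm ⟨y, hy⟩).1, (E₁.equivFin.symm ⟨y, hy⟩).2, ?_⟩
            show (if h : (E₁.equivFin.symm ⟨y, hy⟩).1 ∈ E₁ then _ else _) = y
            rw [dif_pos (E₁.equivFin.symm ⟨y, hy⟩).2]
            show ((E₁.equivFin (E₁.equivFin.symm ⟨y, hy⟩)) : ℕ) = y
            rw [Equiv.apply_symm_apply]
      · intro e' he'
        have hd : G.φ e' = Sym2.diag v := (Finset.mem_filter.1 he').2
        show Sym2.diag 0 = Sym2.map (fun _ => 0) (G.φ e')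
        rw [hd]
        rfl
    have hF1 : F G₁ = (E₁.card : Polynomial ℤ) * X := by
      rw [hIso G₁ (MG.K1 E₁.card) hiso1, hK1]
    -- G₂ by induction
    have hWF2 : G₂.WF := by
      intro e' he' x hx
      have he'' : e' ∈ G.E ∧ ¬ G.φ e' = Sym2.diag v := Finset.mem_filter.1 he'
      obtain ⟨a, ha, hda⟩ := phi_eq_diag_of_loops hL he''.1
      have hxa : x = a := by
        rw [hda] at hx
        rcases Sym2.mem_iff.1 hx with h | h <;> exact h
      subst hxa
      refine Finset.mem_erase.2 ⟨?_, hWF e' he''.1 x ha⟩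
      rintro rfl
      exact he''.2 hda
    have hL2 : ∀ e' ∈ G₂.E, (G₂.φ e').IsDiag :=
      fun e' he' => hL e' (Finset.mem_filter.1 he').1
    have hV2 : G₂.V.card = n := by
      show (G.V.erase v).card = n
      rw [Finset.card_erase_of_mem hv, hV]
      omega
    have hF2 := ih G₂ hV2 hWF2 hL2
    have hfilter : ∀ w ∈ G.V.erase v,
        (E₂.filter (fun e' => G.φ e' = Sym2.diag w))
          = G.E.filter (fun e' => G.φ e' = Sym2.diag w) := by
      intro w hw
      rw [hE₂, Finset.filter_filter]
      apply Finset.filter_congr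
      intro e' _
      constructor
      · rintro ⟨-, h⟩; exact h
      · intro h
        refine ⟨?_, h⟩
        intro hcon
        exact (Finset.mem_erase.1 hw).1 (Sym2.diag_injective (h.symm.trans hcon))
    have hF2' : F G₂ = (∏ w ∈ G.V.erase v,
        ((G.E.filter (fun e' => G.φ e' = Sym2.diag w)).card : Polynomial ℤ)) * X ^ n := by
      rw [hF2, hV2]
      congr 1
      apply Finset.prod_congr rfl
      intro w hw
      rw [show G₂.E = E₂ from rfl, show G₂.V = G.V.erase v from rfl] at *
      rw [hfilter w hw]
    rw [hFG, hF1, hF2', hV,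
      ← Finset.mul_prod_erase G.V
        (fun w => ((G.E.filter (fun e' => G.φ e' = Sym2.diag w)).card : Polynomial ℤ)) hv]
    ring

end
end MG
open Polynomial in
/-- Proposition 1(5): for the specialization J(G, 0, 1, 0, 0, s, 1) —
i.e. any invariant with F(G) = F(G−uv) + F(G/uv) on non-loop edges,
multiplicativity, F(K₁ⁿ) = n·s, F(∅) = 1 — the coefficient of s^k counts
the k-components spanning functional subgraphs of `G`. -/
theorem J_counts_spanning_functional (F : MG → Polynomial ℤ)
    (hIso : ∀ G H : MG, MG.Iso G H → F G = F H)
    (hRec : ∀ (G : MG) (e u v : ℕ), e ∈ G.E → G.φ e = s(u, v) → u ≠ v →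
      F G = F (G.delE e) + F (G.contract e u v))
    (hMul : ∀ G₁ G₂ : MG, Disjoint G₁.V G₂.V → Disjoint G₁.E G₂.E →
      F (MG.disjUnion G₁ G₂) = F G₁ * F G₂)
    (hK1 : ∀ n : ℕ, F (MG.K1 n) = (n : Polynomial ℤ) * X)
    (hEmp : F MG.emp = 1) :
    ∀ (G : MG), G.WF → ∀ k : ℕ, (F G).coeff k = G.funcCount k := by
  suffices h : ∀ (n : ℕ) (G : MG), G.E.card ≤ n → G.WF → ∀ k : ℕ,
      (F G).coeff k = G.funcCount k by
    intro G hWF k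
    exact h G.E.card G le_rfl hWF k
  intro n
  induction n using Nat.strong_induction_on with
  | _ n ih =>
    intro G hcard hWF k
    by_cases hall : ∀ e ∈ G.E, (G.φ e).IsDiag
    · -- loop-only case
      rw [MG.F_loops F hIso hMul hK1 hEmp G.V.card G rfl hWF hall]
      have hprod : (∏ w ∈ G.V,
          ((G.E.filter (fun e' => G.φ e' = Sym2.diag w)).card : Polynomial ℤ))
          = Polynomial.C (∏ w ∈ G.V,
            ((G.E.filter (fun e' => G.φ e' = Sym2.diag w)).card : ℤ)) := by
        rw [map_prod]
        apply Finset.prod_congr rfl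
        intro w _
        simp
      rw [hprod, Polynomial.coeff_C_mul, Polynomial.coeff_X_pow]
      by_cases hk : k = G.V.card
      · subst hk
        rw [if_pos rfl, MG.funcCount_loops_card hWF hall]
        push_cast
        ring
      · rw [if_neg hk, MG.funcCount_loops_ne hall hk]
        ring
    · push_neg at hall
      obtain ⟨e, he, hnd⟩ := hall
      obtain ⟨a, b, hab⟩ := MG.sym2_exists_pair (G.φ e)
      have hne : a ≠ b := by
        rw [hab, Sym2.mk_isDiag_iff] at hnd
        exact hnd
      have hcard1 : 1 ≤ G.E.card := Finset.card_pos.2 ⟨e, he⟩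
      have hlt : G.E.card - 1 < n := by omega
      have hdelcard : (G.delE e).E.card ≤ G.E.card - 1 := by
        show (G.E.erase e).card ≤ G.E.card - 1
        rw [Finset.card_erase_of_mem he]
      have hconcard : (G.contract e a b).E.card ≤ G.E.card - 1 := by
        show (G.E.erase e).card ≤ G.E.card - 1
        rw [Finset.card_erase_of_mem he]
      have hWFdel : (G.delE e).WF := by
        intro e' he' x hx
        exact hWF e' (Finset.mem_of_mem_erase he') x hx
      have hWFcon : (G.contract e a b).WF := by
        intro e' he' x hx
        obtain ⟨c, hc, rfl⟩ := Sym2.mem_map.1 hx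
        have hcV : c ∈ G.V := hWF e' (Finset.mem_of_mem_erase he') c hc
        by_cases hca : c = a
        · rw [if_pos hca]
          refine Finset.mem_erase.2 ⟨hne.symm, ?_⟩
          exact hWF e he b (by rw [hab]; exact Sym2.mem_iff.2 (Or.inr rfl))
        · rw [if_neg hca]
          exact Finset.mem_erase.2 ⟨hca, hcV⟩
      rw [hRec G e a b he hab hne, Polynomial.coeff_add,
        ih (G.E.card - 1) hlt (G.delE e) hdelcard hWFdel k,
        ih (G.E.card - 1) hlt (G.contract e a b) hconcard hWFcon k,
        MG.funcCount_delContract hWF he hab hne k]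
      push_cast
      ring
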